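/- Let L be a vector Dirac structure on a finite-dimensional real vector space V and W ⊆ V a subspace with inclusion ι : W → V. Define the restricted Dirac structure L_W on W by the pair (R_W, θ_W) where R_W = pr₁(L) ∩ W and θ_W = ι*θ (θ being the form induced by L on pr₁(L)). Then there is a canonical linear isomorphism L_W ≅ (L ∩ (W ⊕ V*)) / (L ∩ ({0} ⊕ W°)), where W° ⊆ V* is the annihilator of W. -/

import Mathlib

open Module Submodule LinearMap

set_option maxSynthPendingDepth 2

/-- For a Lagrangian (Dirac) subspace `L`, every functional annihilating `R = pr₁ L`
gives an element `(0, γ) ∈ L`. -/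
lemma dirac_inr_mem (V : Type*) [AddCommGroup V] [Module ℝ V] [FiniteDimensional ℝ V]
    (L : Submodule ℝ (V × Module.Dual ℝ V))
    (hiso : ∀ z ∈ L, ∀ w ∈ L, z.2 w.1 + w.2 z.1 = 0)
    (hdim : Module.finrank ℝ L = Module.finrank ℝ V)
    {γ : Module.Dual ℝ V}
    (hγ : γ ∈ (Submodule.map (LinearMap.fst ℝ V (Module.Dual ℝ V)) L).dualAnnihilator) :
    ((0 : V), γ) ∈ L := by
  set R := Submodule.map (LinearMap.fst ℝ V (Module.Dual ℝ V)) L with hR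
  set K : Submodule ℝ (Module.Dual ℝ V) :=
    Submodule.comap (LinearMap.inr ℝ V (Module.Dual ℝ V)) L with hK
  have hKle : K ≤ R.dualAnnihilator := by
    intro g hg
    rw [Submodule.mem_dualAnnihilator]
    intro y hy
    obtain ⟨w, hw, hwy⟩ := Submodule.mem_map.mp hy
    have := hiso (0, g) hg w hw
    rw [← hwy]
    simpa using this
  -- rank computation
  have hKeq : K = R.dualAnnihilator := by
    apply Submodule.eq_of_le_of_finrank_le hKle
    -- finrank R.dualAnnihilator = finrank V - finrank R
    have h1 : finrank ℝ R + finrank ℝ R.dualAnnihilator = finrank ℝ V := by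
      have := LinearEquiv.finrank_eq (R := ℝ) (M := V ⧸ R)
        (N := { x // x ∈ R.dualAnnihilator }) (Subspace.quotEquivAnnihilator R)
      have h2 := Submodule.finrank_quotient_add_finrank R
      omega
    -- rank-nullity for fst restricted to L
    let f : L →ₗ[ℝ] V := (LinearMap.fst ℝ V (Module.Dual ℝ V)).comp L.subtype
    have hrange : LinearMap.range f = R := by
      rw [hR]
      rw [LinearMap.range_comp, Submodule.range_subtype]
    have hrk := @LinearMap.finrank_range_add_finrank_ker ℝ (↥L) _ _ _ V _ _ _ f
    -- injection ker f → K
    have hker : finrank ℝ (LinearMap.ker f) ≤ finrank ℝ K := by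
      have hmem : ∀ z : LinearMap.ker f, (z : L).1.2 ∈ K := by
        rintro ⟨⟨⟨x, g⟩, hzL⟩, hz⟩
        have hx : x = 0 := hz
        simp only [hK, Submodule.mem_comap, LinearMap.coe_inr]
        simpa [hx] using hzL
      let j : LinearMap.ker f →ₗ[ℝ] K :=
        LinearMap.codRestrict K
          ((LinearMap.snd ℝ V (Module.Dual ℝ V)).comp (L.subtype.comp (LinearMap.ker f).subtype))
          hmem
      have hinj : Function.Injective j := by
        rintro ⟨⟨⟨x, g⟩, hzL⟩, hz⟩ ⟨⟨⟨x', g'⟩, hzL'⟩, hz'⟩ h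
        have hg : g = g' := congrArg Subtype.val h
        have hx : x = 0 := hz
        have hx' : x' = 0 := hz'
        subst hg hx hx'
        rfl
      exact LinearMap.finrank_le_finrank_of_injective hinj
    rw [hrange] at hrk
    omega
  have : γ ∈ K := hKeq ▸ hγ
  simpa [hK] using this

/-- Restriction of a vector Dirac structure `L` on `V` to a subspace `W`: the Dirac
structure `L_W` on `W` defined by the pair `(pr₁(L) ∩ W, ι*θ)` is canonically isomorphic to
`(L ∩ (W ⊕ V*)) / (L ∩ ({0} ⊕ W°))`.  The isomorphism is expressed by exhibiting the
canonical surjective linear map `L ∩ (W ⊕ V*) → L_W`, `(X, α) ↦ (X, α|_W)`, whose kernel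
is `L ∩ ({0} ⊕ W°)`. -/
theorem stmt_7 (V : Type*) [AddCommGroup V] [Module ℝ V] [FiniteDimensional ℝ V]
    (L : Submodule ℝ (V × Module.Dual ℝ V))
    (hiso : ∀ z ∈ L, ∀ w ∈ L, z.2 w.1 + w.2 z.1 = 0)
    (hdim : Module.finrank ℝ L = Module.finrank ℝ V)
    (W : Submodule ℝ V)
    (θ : Submodule.map (LinearMap.fst ℝ V (Module.Dual ℝ V)) L →ₗ[ℝ]
         Submodule.map (LinearMap.fst ℝ V (Module.Dual ℝ V)) L →ₗ[ℝ] ℝ)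
    (hθ : ∀ (X Y : V) (α β : Module.Dual ℝ V) (hX : (X, α) ∈ L) (hY : (Y, β) ∈ L),
        θ ⟨X, Submodule.mem_map.mpr ⟨(X, α), hX, rfl⟩⟩
          ⟨Y, Submodule.mem_map.mpr ⟨(Y, β), hY, rfl⟩⟩ = α Y) :
    ∃ LW : Submodule ℝ (↥W × Module.Dual ℝ ↥W),
      (LW : Set (↥W × Module.Dual ℝ ↥W)) =
        {p | ∃ h : (p.1 : V) ∈ Submodule.map (LinearMap.fst ℝ V (Module.Dual ℝ V)) L,
          ∀ (y : V) (hyR : y ∈ Submodule.map (LinearMap.fst ℝ V (Module.Dual ℝ V)) L)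
            (hyW : y ∈ W), p.2 ⟨y, hyW⟩ = θ ⟨(p.1 : V), h⟩ ⟨y, hyR⟩} ∧
      ∃ φ : ↥(L ⊓ W.prod (⊤ : Submodule ℝ (Module.Dual ℝ V))) →ₗ[ℝ] ↥LW,
        Function.Surjective φ ∧
        LinearMap.ker φ =
          Submodule.comap (L ⊓ W.prod (⊤ : Submodule ℝ (Module.Dual ℝ V))).subtype
            (L ⊓ (⊥ : Submodule ℝ V).prod W.dualAnnihilator) ∧
        ∀ p : ↥(L ⊓ W.prod (⊤ : Submodule ℝ (Module.Dual ℝ V))),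
          (((φ p : ↥W × Module.Dual ℝ ↥W).1 : V) = (p : V × Module.Dual ℝ V).1) ∧
          ∀ w : ↥W, (φ p : ↥W × Module.Dual ℝ ↥W).2 w = (p : V × Module.Dual ℝ V).2 w.1 := by
  classical
  set M := L ⊓ W.prod (⊤ : Submodule ℝ (Module.Dual ℝ V)) with hMdef
  have hmemW : ∀ z : M, ((z : V × Module.Dual ℝ V).1) ∈ W := fun z =>
    ((Submodule.mem_prod.mp (Submodule.mem_inf.mp z.2).2).1)
  let f1 : M →ₗ[ℝ] W :=
    LinearMap.codRestrict W ((LinearMap.fst ℝ V (Module.Dual ℝ V)).comp M.subtype) hmemW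
  let f2 : M →ₗ[ℝ] Module.Dual ℝ W :=
    W.subtype.dualMap.comp ((LinearMap.snd ℝ V (Module.Dual ℝ V)).comp M.subtype)
  let φ0 := f1.prod f2
  refine ⟨LinearMap.range φ0, ?_, φ0.rangeRestrict, φ0.surjective_rangeRestrict, ?_, ?_⟩
  · -- set equality
    apply Set.ext
    intro p
    constructor
    · rintro ⟨z, rfl⟩
      obtain ⟨⟨X, α⟩, hzM⟩ := z
      have hzL : (X, α) ∈ L := (Submodule.mem_inf.mp hzM).1
      refine ⟨Submodule.mem_map.mpr ⟨(X, α), hzL, rfl⟩, ?_⟩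
      intro y hyR hyW
      obtain ⟨w, hwL, hwy⟩ := hyR
      subst hwy
      have hwL' : (w.1, w.2) ∈ L := hwL
      exact (hθ X w.1 α w.2 hzL hwL').symm
    · rintro ⟨h, hp⟩
      obtain ⟨w, hwL, hw1⟩ := h
      set α₀ := w.2 with hα₀
      have hXα : ((p.1 : V), α₀) ∈ L := by
        rw [← hw1]; exact hwL
      set δ : Module.Dual ℝ W := p.2 - W.subtype.dualMap α₀ with hδdef
      have hδ' : Subspace.dualLift W δ ∈
          (Submodule.map (LinearMap.fst ℝ V (Module.Dual ℝ V)) L ⊓ W).dualAnnihilator := by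
        rw [Submodule.mem_dualAnnihilator]
        intro v hv
        obtain ⟨hvR, hvW⟩ := Submodule.mem_inf.mp hv
        have h1 : Subspace.dualLift W δ v = δ ⟨v, hvW⟩ := Subspace.dualLift_of_mem hvW
        have h2 : p.2 ⟨v, hvW⟩ = α₀ v := by
          obtain ⟨u, huL, hu1⟩ := id hvR
          have hu1' : u.1 = v := hu1
          have huL' : (v, u.2) ∈ L := by rw [← hu1']; exact huL
          have := hθ (p.1 : V) v α₀ u.2 hXα huL'
          exact (hp v hvR hvW).trans this
        rw [h1, hδdef]
        simp only [LinearMap.sub_apply, LinearMap.dualMap_apply, Submodule.coe_subtype]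
        rw [h2]
        ring
      rw [Subspace.dualAnnihilator_inf_eq] at hδ'
      obtain ⟨γ, hγ, η, hη, hsum⟩ := Submodule.mem_sup.mp hδ'
      have hγL : ((0 : V), γ) ∈ L := dirac_inr_mem V L hiso hdim hγ
      have hαL : ((p.1 : V), α₀ + γ) ∈ L := by
        have := L.add_mem hXα hγL
        simpa using this
      have hzM : ((p.1 : V), α₀ + γ) ∈ M := by
        rw [hMdef]
        exact Submodule.mem_inf.mpr ⟨hαL, Submodule.mem_prod.mpr ⟨p.1.2, trivial⟩⟩
      refine ⟨⟨((p.1 : V), α₀ + γ), hzM⟩, ?_⟩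
      have hγw : ∀ u : W, γ (u : V) = δ u := by
        intro u
        have hηu : η (u : V) = 0 := (Submodule.mem_dualAnnihilator η).mp hη (u : V) u.2
        have : (γ + η) (u : V) = Subspace.dualLift W δ (u : V) := by rw [hsum]
        rw [Subspace.dualLift_of_subtype] at this
        simpa [hηu] using this
      apply Prod.ext
      · exact Subtype.ext rfl
      · apply LinearMap.ext
        intro u
        have : α₀ (u : V) + γ (u : V) = p.2 u := by
          rw [hγw u, hδdef]
          simp only [LinearMap.sub_apply, LinearMap.dualMap_apply, Submodule.coe_subtype]
          ring
        exact this
  · -- kernel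
    rw [LinearMap.ker_rangeRestrict]
    ext z
    obtain ⟨⟨X, α⟩, hzM⟩ := z
    have hzL : (X, α) ∈ L := (Submodule.mem_inf.mp hzM).1
    simp only [LinearMap.mem_ker, Submodule.mem_comap, Submodule.coe_subtype,
      Submodule.mem_inf, Submodule.mem_prod, Submodule.mem_bot, Submodule.mem_top]
    constructor
    · intro hz
      have h1 : f1 ⟨(X, α), hzM⟩ = 0 := congrArg Prod.fst hz
      have h2 : f2 ⟨(X, α), hzM⟩ = 0 := congrArg Prod.snd hz
      refine ⟨hzL, ?_, ?_⟩
      · exact congrArg Subtype.val h1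
      · rw [Submodule.mem_dualAnnihilator]
        intro u hu
        exact congrFun (congrArg DFunLike.coe h2) ⟨u, hu⟩
    · rintro ⟨-, hX0, hα⟩
      apply Prod.ext
      · exact Subtype.ext hX0
      · apply LinearMap.ext
        intro u
        exact (Submodule.mem_dualAnnihilator α).mp hα (u : V) u.2
  · intro p
    exact ⟨rfl, fun w => rfl⟩
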